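/- Let f be a flow on a digraph with red and blue edges, with one blue and one red edge leaving each vertex. For each n, the sum over all n-sortings P = (C,v) of f of the weight b(P) = t^{n(f_b^- - f_b^+)}(1-t)^{f_r^-} t^{f_r^-(v)} (1-t^{-1})^{f_r^+} t^{-f_r^+(n-1) + f_r^+(v)} equals mult(f) · β(f)|_{t→t^n}, where mult(f) = ∏_v binom(f(v), f(e^b_v)) and β(f) substitutes edge weights t^{∓1} for blue and (1 - t^{∓1}) for red edges according to vertex signs. -/

import Mathlib

open scoped Classical
open Finset

/-- `IsSorting tgt fb C` : `C` is a sorting of the flow with blue out-values `fb`;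
`E` is the set of labeled copies of red edges and `tgt e` the terminal vertex of `e`. -/
def IsSorting {r : ℕ} {E : Type*} [Fintype E] (tgt : E → Fin r) (fb : Fin r → ℕ)
    (C : Fin r → Finset E) : Prop :=
  ∀ i : Fin r, (C i).card = fb i ∧
    C i ⊆ (if i.val = 0 then ∅
            else C ⟨i.val - 1, lt_of_le_of_lt (Nat.sub_le _ _) i.isLt⟩) ∪
          Finset.univ.filter (fun e => tgt e = i)

section Count
variable {r : ℕ} {E : Type*} [Fintype E] (tgt : E → Fin r) (fb : Fin r → ℕ)

/-- partial sorting up to (exclusive) index m -/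
def PartialSorting (m : ℕ) (C : Fin r → Finset E) : Prop :=
  (∀ i : Fin r, i.val < m → (C i).card = fb i ∧
    C i ⊆ (if i.val = 0 then ∅
            else C ⟨i.val - 1, lt_of_le_of_lt (Nat.sub_le _ _) i.isLt⟩) ∪
          Finset.univ.filter (fun e => tgt e = i)) ∧
  (∀ i : Fin r, m ≤ i.val → C i = ∅)

lemma tgt_le_of_partial {m : ℕ} {C : Fin r → Finset E}
    (h : ∀ i : Fin r, i.val < m → (C i).card = fb i ∧
      C i ⊆ (if i.val = 0 then ∅
              else C ⟨i.val - 1, lt_of_le_of_lt (Nat.sub_le _ _) i.isLt⟩) ∪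
            Finset.univ.filter (fun e => tgt e = i)) :
    ∀ i : Fin r, i.val < m → ∀ e ∈ C i, (tgt e).val ≤ i.val := by
  suffices H : ∀ k, ∀ i : Fin r, i.val = k → i.val < m → ∀ e ∈ C i, (tgt e).val ≤ i.val from
    fun i => H i.val i rfl
  intro k
  induction k using Nat.strong_induction_on with
  | _ k ih =>
    intro i hk hi e he
    have hsub := (h i hi).2
    rcases Finset.mem_union.1 (hsub he) with h1 | h1
    · by_cases h0 : i.val = 0
      · simp [h0] at h1
      · simp only [if_neg h0] at h1
        have := ih (i.val - 1) (by omega) ⟨i.val - 1, lt_of_le_of_lt (Nat.sub_le _ _) i.isLt⟩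
          rfl (by simp only [Fin.val_mk]; omega) e h1
        simp only [Fin.val_mk] at this
        omega
    · have : tgt e = i := by simpa using h1
      simp [this]

lemma card_partial (m : ℕ) (hm : m ≤ r) :
    (Finset.univ.filter (fun C : Fin r → Finset E => PartialSorting tgt fb m C)).card
      = ∏ i ∈ Finset.univ.filter (fun i : Fin r => i.val < m),
          ((if i.val = 0 then 0 else fb ⟨i.val - 1, lt_of_le_of_lt (Nat.sub_le _ _) i.isLt⟩)
            + (Finset.univ.filter (fun e => tgt e = i)).card).choose (fb i) := by
  induction m with
  | zero =>
    have h1 : (Finset.univ.filter (fun C : Fin r → Finset E => PartialSorting tgt fb 0 C))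
        = {fun _ => (∅ : Finset E)} := by
      ext C
      simp only [mem_filter, mem_univ, true_and, mem_singleton]
      simp only [PartialSorting]
      constructor
      · rintro ⟨-, h2⟩; funext i; exact h2 i (Nat.zero_le _)
      · rintro rfl; exact ⟨fun i hi => absurd hi (Nat.not_lt_zero _), fun i _ => rfl⟩
    rw [h1]
    simp
  | succ m ih =>
    have hm' : m < r := hm
    set M : Fin r := ⟨m, hm'⟩ with hM
    have hMval : M.val = m := rfl
    set Φ : (Fin r → Finset E) → (Fin r → Finset E) := fun C => Function.update C M ∅ with hΦ
    have hpredne : ∀ i : Fin r, (⟨i.val - 1, lt_of_le_of_lt (Nat.sub_le _ _) i.isLt⟩ : Fin r) = M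
        → i.val - 1 = m := fun i h => by
      have := congrArg Fin.val h; simpa using this
    have hmaps : ∀ C ∈ Finset.univ.filter
        (fun C : Fin r → Finset E => PartialSorting tgt fb (m+1) C),
        Φ C ∈ Finset.univ.filter (fun C : Fin r → Finset E => PartialSorting tgt fb m C) := by
      intro C hC
      simp only [mem_filter, mem_univ, true_and] at hC ⊢
      obtain ⟨h1, h2⟩ := hC
      constructor
      · intro i hi
        have hne : i ≠ M := Fin.ne_of_val_ne (by omega)
        have hne' : (⟨i.val - 1, lt_of_le_of_lt (Nat.sub_le _ _) i.isLt⟩ : Fin r) ≠ M := by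
          intro h; have := hpredne i h; omega
        rw [hΦ]
        simp only [Function.update_of_ne hne, Function.update_of_ne hne']
        exact h1 i (Nat.lt_succ_of_lt hi)
      · intro i hi
        by_cases h : i = M
        · rw [h, hΦ]; simp
        · rw [hΦ]; simp only [Function.update_of_ne h]
          apply h2
          have : i.val ≠ m := fun hh => h (Fin.ext (by omega))
          omega
    rw [Finset.card_eq_sum_card_fiberwise hmaps]
    have hfiber : ∀ C ∈ Finset.univ.filter
        (fun C : Fin r → Finset E => PartialSorting tgt fb m C),
        ((Finset.univ.filter (fun C : Fin r → Finset E => PartialSorting tgt fb (m+1) C)).filter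
            (fun C' => Φ C' = C)).card
          = ((if M.val = 0 then 0 else fb ⟨M.val - 1, lt_of_le_of_lt (Nat.sub_le _ _) M.isLt⟩)
              + (Finset.univ.filter (fun e => tgt e = M)).card).choose (fb M) := by
      intro C hC
      simp only [mem_filter, mem_univ, true_and] at hC
      obtain ⟨hC1, hC2⟩ := hC
      have hCM : C M = ∅ := hC2 M (le_of_eq hMval.symm)
      set prevC : Finset E := if M.val = 0 then ∅
        else C ⟨M.val - 1, lt_of_le_of_lt (Nat.sub_le _ _) M.isLt⟩ with hprevC
      set T : Finset E := Finset.univ.filter (fun e => tgt e = M) with hT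
      have hdisj : Disjoint prevC T := by
        rw [Finset.disjoint_left]
        intro e he heT
        have htgt : tgt e = M := by simpa [hT] using heT
        by_cases h0 : M.val = 0
        · rw [hprevC, if_pos h0] at he; simp at he
        · rw [hprevC, if_neg h0] at he
          have hlt : (⟨M.val - 1, lt_of_le_of_lt (Nat.sub_le _ _) M.isLt⟩ : Fin r).val < m := by
            show M.val - 1 < m; omega
          have := tgt_le_of_partial tgt fb hC1 _ hlt e he
          rw [htgt] at this
          simp only [Fin.val_mk] at this
          omega
      have hprevcard : prevC.card
          = (if M.val = 0 then 0 else fb ⟨M.val - 1, lt_of_le_of_lt (Nat.sub_le _ _) M.isLt⟩) := by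
        by_cases h0 : M.val = 0
        · rw [hprevC, if_pos h0, if_pos h0]; simp
        · rw [hprevC, if_neg h0, if_neg h0]
          exact (hC1 _ (show M.val - 1 < m by omega)).1
      have hkey : ((Finset.univ.filter
            (fun C : Fin r → Finset E => PartialSorting tgt fb (m+1) C)).filter
            (fun C' => Φ C' = C)).card
          = (Finset.powersetCard (fb M) (prevC ∪ T)).card := by
        apply Finset.card_bij (fun C' _ => C' M)
        · -- maps into powersetCard
          intro C' hC'
          simp only [mem_filter, mem_univ, true_and] at hC'
          obtain ⟨⟨h1, h2⟩, h3⟩ := hC'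
          have heq : ∀ j : Fin r, j ≠ M → C' j = C j := by
            intro j hj
            have h5 : Function.update C' M ∅ j = C j := congrFun h3 j
            rwa [Function.update_of_ne hj] at h5
          rw [Finset.mem_powersetCard]
          refine ⟨?_, (h1 M (by omega)).1⟩
          have hsub := (h1 M (by omega)).2
          intro e he
          rcases Finset.mem_union.1 (hsub he) with h4 | h4
          · by_cases h0 : M.val = 0
            · rw [if_pos h0] at h4; simp at h4
            · rw [if_neg h0] at h4
              have hne : (⟨M.val - 1, lt_of_le_of_lt (Nat.sub_le _ _) M.isLt⟩ : Fin r) ≠ M := by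
                intro hh; have := hpredne M hh; omega
              rw [heq _ hne] at h4
              exact Finset.mem_union_left _ (by rw [hprevC, if_neg h0]; exact h4)
          · exact Finset.mem_union_right _ (by rwa [hT])
        · -- injective
          intro C₁ h₁ C₂ h₂ heq
          simp only [mem_filter, mem_univ, true_and] at h₁ h₂
          funext j
          by_cases hj : j = M
          · rw [hj]; exact heq
          · have e₁ : Function.update C₁ M ∅ j = C j := congrFun h₁.2 j
            have e₂ : Function.update C₂ M ∅ j = C j := congrFun h₂.2 j
            rw [Function.update_of_ne hj] at e₁ e₂
            rw [e₁, e₂]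
        · -- surjective
          intro s hs
          rw [Finset.mem_powersetCard] at hs
          obtain ⟨hs1, hs2⟩ := hs
          refine ⟨Function.update C M s, ?_, by simp⟩
          simp only [mem_filter, mem_univ, true_and]
          refine ⟨⟨?_, ?_⟩, ?_⟩
          · intro i hi
            by_cases hiM : i = M
            · subst hiM
              simp only [Function.update_self]
              refine ⟨hs2, ?_⟩
              have hsets : (if M.val = 0 then (∅ : Finset E)
                    else Function.update C M s ⟨M.val - 1, lt_of_le_of_lt (Nat.sub_le _ _) M.isLt⟩)
                  = prevC := by
                by_cases h0 : M.val = 0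
                · rw [if_pos h0, hprevC, if_pos h0]
                · rw [if_neg h0, hprevC, if_neg h0,
                    Function.update_of_ne (fun hh => by have := hpredne M hh; omega)]
              rw [hsets]
              intro e he
              exact (Finset.mem_union.2 (by
                rcases Finset.mem_union.1 (hs1 he) with h4 | h4
                · exact Or.inl h4
                · exact Or.inr (by rw [hT] at h4; exact h4)))
            · have hilt : i.val < m := by
                have : i.val ≠ m := fun hh => hiM (Fin.ext (by omega))
                omega
              have hne2 : (⟨i.val - 1, lt_of_le_of_lt (Nat.sub_le _ _) i.isLt⟩ : Fin r) ≠ M := by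
                intro hh; have := hpredne i hh; omega
              rw [Function.update_of_ne hiM, Function.update_of_ne hne2]
              exact hC1 i hilt
          · intro i hi
            have hne : i ≠ M := Fin.ne_of_val_ne (by omega)
            rw [Function.update_of_ne hne]
            exact hC2 i (by omega)
          · show Function.update (Function.update C M s) M ∅ = C
            funext j
            by_cases hj : j = M
            · subst hj; simp [hCM]
            · simp [Function.update_of_ne hj]
      rw [hkey, Finset.card_powersetCard, Finset.card_union_of_disjoint hdisj, hprevcard, hT]
    rw [Finset.sum_congr rfl hfiber, Finset.sum_const, ih (le_of_lt hm'), smul_eq_mul]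
    have hins : Finset.univ.filter (fun i : Fin r => i.val < m + 1)
        = insert M (Finset.univ.filter (fun i : Fin r => i.val < m)) := by
      ext i
      simp only [mem_filter, mem_univ, true_and, mem_insert]
      constructor
      · intro hi
        by_cases h : i.val = m
        · exact Or.inl (Fin.ext (by omega))
        · exact Or.inr (by omega)
      · rintro (rfl | hi)
        · omega
        · omega
    rw [hins, Finset.prod_insert (by simp [hMval])]
    ring

lemma card_sortings :
    (Finset.univ.filter (fun C : Fin r → Finset E => IsSorting tgt fb C)).card
      = ∏ i : Fin r,
          ((if i.val = 0 then 0 else fb ⟨i.val - 1, lt_of_le_of_lt (Nat.sub_le _ _) i.isLt⟩)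
            + (Finset.univ.filter (fun e => tgt e = i)).card).choose (fb i) := by
  have h1 : (Finset.univ.filter (fun C : Fin r → Finset E => IsSorting tgt fb C))
      = (Finset.univ.filter (fun C : Fin r → Finset E => PartialSorting tgt fb r C)) := by
    ext C
    simp only [Finset.mem_filter, Finset.mem_univ, true_and]
    simp only [IsSorting, PartialSorting]
    constructor
    · intro h
      exact ⟨fun i _ => h i, fun i hi => absurd i.isLt (not_lt.2 hi)⟩
    · intro h i
      exact h.1 i i.isLt
  have h2 : (Finset.univ.filter (fun i : Fin r => i.val < r)) = Finset.univ := by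
    ext i; simp [i.isLt]
  rw [h1, card_partial tgt fb r (le_refl r), h2]

lemma card_filter_sigma (fr : Fin r → ℕ) (tr : Fin r → Fin r) (i : Fin r) :
    (Finset.univ.filter (fun e : (w : Fin r) × Fin (fr w) => tr e.1 = i)).card
      = ∑ w ∈ Finset.univ.filter (fun w => tr w = i), fr w := by
  rw [Finset.card_filter, ← Finset.univ_sigma_univ, Finset.sum_sigma]
  rw [Finset.sum_filter]
  apply Finset.sum_congr rfl
  intro w _
  by_cases h : tr w = i <;> simp [h]

end Count
open scoped Classical
open Finset
open Finset
section Helpers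
variable {K : Type*} [Field K]

lemma geom_one_sub (t : K) (n : ℕ) :
    (1 - t) * (∑ k ∈ Finset.range n, t ^ k) = 1 - t ^ n := by
  have h := geom_sum_mul t n
  linear_combination -h

lemma shift_geom (t : K) (ht : t ≠ 0) (n : ℕ) :
    t ^ ((1 : ℤ) - (n : ℤ)) * (∑ k ∈ Finset.range n, t ^ k)
      = ∑ k ∈ Finset.range n, (t⁻¹) ^ k := by
  rw [Finset.mul_sum, ← Finset.sum_range_reflect (fun k => (t⁻¹) ^ k) n]
  apply Finset.sum_congr rfl
  intro k hk
  rw [Finset.mem_range] at hk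
  rw [inv_pow, ← zpow_natCast t (n - 1 - k), ← zpow_neg, ← zpow_natCast t k, ← zpow_add₀ ht]
  congr 1
  omega

lemma geom_inv (t : K) (ht : t ≠ 0) (n : ℕ) :
    (1 - t⁻¹) * (t ^ ((1 : ℤ) - (n : ℤ)) * (∑ k ∈ Finset.range n, t ^ k))
      = 1 - t ^ (-(n : ℤ)) := by
  rw [shift_geom t ht, geom_one_sub t⁻¹ n, inv_pow, ← zpow_natCast t, ← zpow_neg]

end Helpers

/-- For a flow `f` on a signed digraph with one blue and one red edge leaving each
vertex (blue flow `fb`, red flow `fr`, red targets `tr`, vertex signs `sign = ±1`),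
the sum over all `n`-sortings `P = (C,v)` of the weight
`b(P) = t^{n(f_b⁻ - f_b⁺)} (1-t)^{f_r⁻} t^{f_r⁻(v)} (1-t⁻¹)^{f_r⁺} t^{-f_r⁺(n-1)+f_r⁺(v)}`
equals `mult(f) ⬝ β(f)|_{t → tⁿ}`, where `mult(f) = ∏_v C(f(v), f(e^b_v))` and `β(f)`
gives each blue edge leaving a vertex of sign `ε` the weight `t^{-ε}` and each red edge
the weight `1 - t^{-ε}`. -/
theorem sum_n_sortings_eq_mult_beta {K : Type*} [Field K] (t : K) (ht : t ≠ 0)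
    (r n : ℕ) (fb fr : Fin r → ℕ) (tr : Fin r → Fin r) (sign : Fin r → ℤ)
    (hsign : ∀ w, sign w = 1 ∨ sign w = -1)
    (h0 : ∀ i : Fin r, i.val = 0 →
      (∑ w ∈ Finset.univ.filter (fun w => tr w = i), fr w) = fb i + fr i)
    (hcons : ∀ i : Fin r, 0 < i.val →
      fb i + fr i =
        fb ⟨i.val - 1, lt_of_le_of_lt (Nat.sub_le _ _) i.isLt⟩ +
          ∑ w ∈ Finset.univ.filter (fun w => tr w = i), fr w) :
    let E := (w : Fin r) × Fin (fr w)
    let tgt : E → Fin r := fun e => tr e.1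
    let fbp : ℕ := ∑ w ∈ Finset.univ.filter (fun w => sign w = 1), fb w
    let fbm : ℕ := ∑ w ∈ Finset.univ.filter (fun w => sign w = -1), fb w
    let frp : ℕ := ∑ w ∈ Finset.univ.filter (fun w => sign w = 1), fr w
    let frm : ℕ := ∑ w ∈ Finset.univ.filter (fun w => sign w = -1), fr w
    ∑ P ∈ Finset.univ.filter
        (fun P : (Fin r → Finset E) × (E → Fin n) => IsSorting tgt fb P.1),
      t ^ ((n : ℤ) * ((fbm : ℤ) - (fbp : ℤ))) * (1 - t) ^ frm *
        t ^ (∑ e ∈ Finset.univ.filter (fun e : E => sign e.1 = -1), ((P.2 e : ℕ) : ℤ)) *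
        (1 - t⁻¹) ^ frp *
        t ^ (-(frp : ℤ) * ((n : ℤ) - 1) +
              ∑ e ∈ Finset.univ.filter (fun e : E => sign e.1 = 1), ((P.2 e : ℕ) : ℤ))
      = (∏ w : Fin r, ((fb w + fr w).choose (fb w) : K)) *
          ∏ w : Fin r,
            (t ^ (-(sign w) * (n : ℤ))) ^ (fb w) *
              (1 - t ^ (-(sign w) * (n : ℤ))) ^ (fr w) := by
  intro E tgt fbp fbm frp frm
  classical
  -- filters by sign of source vertex
  have hfiltE : Finset.univ.filter (fun e : E => sign e.1 = -1)
      = Finset.univ.filter (fun e : E => ¬ sign e.1 = 1) := by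
    ext e
    simp only [mem_filter, mem_univ, true_and]
    rcases hsign e.1 with h | h <;> simp [h]
  have hfiltV : Finset.univ.filter (fun w : Fin r => sign w = -1)
      = Finset.univ.filter (fun w : Fin r => ¬ sign w = 1) := by
    ext w
    simp only [mem_filter, mem_univ, true_and]
    rcases hsign w with h | h <;> simp [h]
  -- step 1 : separate the sum over C and over v
  have hset : (Finset.univ.filter (fun P : (Fin r → Finset E) × (E → Fin n) => IsSorting tgt fb P.1))
      = (Finset.univ.filter (fun C : Fin r → Finset E => IsSorting tgt fb C)) ×ˢ
          (Finset.univ : Finset (E → Fin n)) := by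
    ext P
    simp [Finset.mem_product]
  rw [hset]
  rw [Finset.sum_product]
  simp only [Prod.snd]
  rw [Finset.sum_const, nsmul_eq_mul]
  -- step 2 : count the sortings
  have hcard : (Finset.univ.filter (fun C : Fin r → Finset E => IsSorting tgt fb C)).card
      = ∏ w : Fin r, (fb w + fr w).choose (fb w) := by
    rw [card_sortings tgt fb]
    apply Finset.prod_congr rfl
    intro i _
    congr 1
    have hcs : (Finset.univ.filter (fun e : E => tgt e = i)).card
        = ∑ w ∈ Finset.univ.filter (fun w => tr w = i), fr w := card_filter_sigma fr tr i
    rw [hcs]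
    by_cases h : i.val = 0
    · rw [if_pos h, zero_add]
      exact h0 i h
    · rw [if_neg h]
      exact (hcons i (Nat.pos_of_ne_zero h)).symm
  rw [hcard, Nat.cast_prod]
  congr 1
  -- step 3 : the sum over v
  set S : K := ∑ k ∈ Finset.range n, t ^ k with hSdef
  have hsplit : ∀ v : E → Fin n,
      (∑ e ∈ Finset.univ.filter (fun e : E => sign e.1 = -1), ((v e : ℕ) : ℤ)) +
        (∑ e ∈ Finset.univ.filter (fun e : E => sign e.1 = 1), ((v e : ℕ) : ℤ))
      = ∑ e : E, ((v e : ℕ) : ℤ) := by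
    intro v
    rw [hfiltE, add_comm]
    exact Finset.sum_filter_add_sum_filter_not _ _ _
  have hterm : ∀ v : E → Fin n,
      t ^ ((n : ℤ) * ((fbm : ℤ) - (fbp : ℤ))) * (1 - t) ^ frm *
        t ^ (∑ e ∈ Finset.univ.filter (fun e : E => sign e.1 = -1), ((v e : ℕ) : ℤ)) *
        (1 - t⁻¹) ^ frp *
        t ^ (-(frp : ℤ) * ((n : ℤ) - 1) +
              ∑ e ∈ Finset.univ.filter (fun e : E => sign e.1 = 1), ((v e : ℕ) : ℤ))
      = (t ^ ((n : ℤ) * ((fbm : ℤ) - (fbp : ℤ))) * (1 - t) ^ frm * (1 - t⁻¹) ^ frp *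
          t ^ (-(frp : ℤ) * ((n : ℤ) - 1))) * t ^ (∑ e : E, ((v e : ℕ) : ℤ)) := by
    intro v
    rw [← hsplit v, zpow_add₀ ht, zpow_add₀ ht]
    ring
  rw [Finset.sum_congr rfl (fun v _ => hterm v), ← Finset.mul_sum]
  -- the geometric sum
  have hsumv : (∑ v : E → Fin n, t ^ (∑ e : E, ((v e : ℕ) : ℤ))) = S ^ (frp + frm) := by
    have h1 : ∀ v : E → Fin n, t ^ (∑ e : E, ((v e : ℕ) : ℤ)) = ∏ e : E, t ^ ((v e : ℕ)) := by
      intro v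
      rw [← Nat.cast_sum, zpow_natCast, ← Finset.prod_pow_eq_pow_sum]
    rw [Finset.sum_congr rfl (fun v _ => h1 v)]
    rw [← Fintype.prod_sum (fun (_ : E) (k : Fin n) => t ^ (k : ℕ))]
    have h2 : (∑ k : Fin n, t ^ (k : ℕ)) = S := Fin.sum_univ_eq_sum_range _ n
    rw [h2, Finset.prod_const, Finset.card_univ]
    congr 1
    rw [Fintype.card_sigma]
    simp only [Fintype.card_fin]
    rw [← Finset.sum_filter_add_sum_filter_not Finset.univ (fun w : Fin r => sign w = 1) fr,
      ← hfiltV]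
  rw [hsumv]
  -- step 4 : the right-hand side product
  have hY : (∏ w : Fin r, (t ^ (-(sign w) * (n : ℤ))) ^ (fb w) *
        (1 - t ^ (-(sign w) * (n : ℤ))) ^ (fr w))
      = ((t ^ (-(n : ℤ))) ^ fbp * (1 - t ^ (-(n : ℤ))) ^ frp) *
          ((t ^ ((n : ℤ))) ^ fbm * (1 - t ^ ((n : ℤ))) ^ frm) := by
    rw [← Finset.prod_filter_mul_prod_filter_not Finset.univ (fun w : Fin r => sign w = 1)]
    congr 1
    · rw [Finset.prod_congr rfl (fun w hw => by
        rw [(Finset.mem_filter.1 hw).2, show (-(1 : ℤ)) * (n : ℤ) = -(n : ℤ) by ring])]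
      rw [Finset.prod_mul_distrib, Finset.prod_pow_eq_pow_sum, Finset.prod_pow_eq_pow_sum]
    · rw [← hfiltV]
      rw [Finset.prod_congr rfl (fun w hw => by
        rw [(Finset.mem_filter.1 hw).2, show (-(-1 : ℤ)) * (n : ℤ) = ((n : ℤ)) by ring])]
      rw [Finset.prod_mul_distrib, Finset.prod_pow_eq_pow_sum, Finset.prod_pow_eq_pow_sum]
  rw [hY]
  -- step 5 : scalar identity
  have hg1 : (1 - t ^ ((n : ℤ))) = (1 - t) * S := by
    rw [zpow_natCast, hSdef, geom_one_sub]
  have hg2 : (1 - t ^ (-(n : ℤ))) = (1 - t⁻¹) * (t ^ ((1 : ℤ) - (n : ℤ)) * S) := by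
    rw [hSdef, geom_inv t ht]
  rw [hg1, hg2]
  rw [show (n : ℤ) * ((fbm : ℤ) - (fbp : ℤ)) = (n : ℤ) * (fbm : ℤ) + (-(n : ℤ)) * (fbp : ℤ) by ring,
    zpow_add₀ ht, zpow_mul, zpow_mul, zpow_natCast, zpow_natCast,
    show -(frp : ℤ) * ((n : ℤ) - 1) = ((1 : ℤ) - (n : ℤ)) * (frp : ℤ) by ring,
    zpow_mul, zpow_natCast, zpow_natCast, pow_add, mul_pow, mul_pow, mul_pow]
  ring
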